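/- arXiv:0908.4579 — 5 statements merged into one kernel-verified Lean document; each statement's English description precedes it below -/
import Mathlib

section
/- Let Δ = P + R ⊂ ℝˡ be the Minkowski sum of a compact polytope P and a strictly convex closed polyhedral cone R with vertex at the origin. Let q(y) = 1 + α·y be an affine function that is strictly positive on Δ and such that α·v > 0 for every nonzero v ∈ R. Then the image of Δ under the map y ↦ y/q(y) is bounded. -/
open scoped RealInnerProductSpace Pointwise

/-- If `Δ = P + R` with `P` a compact convex polytope and `R` a closed strictly
convex (no lines) polyhedral cone with vertex the origin, and `q(y) = 1 + α·y`
is strictly positive on `Δ` with `α·v > 0` for every nonzero `v ∈ R`, then the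
image of `Δ` under `y ↦ y/q(y)` is bounded. -/
theorem image_of_polyhedron_bounded (l : ℕ)
    (P R : Set (EuclideanSpace ℝ (Fin l))) (α : EuclideanSpace ℝ (Fin l))
    (hPcpt : IsCompact P) (hPconv : Convex ℝ P) (hPne : P.Nonempty)
    (hRclosed : IsClosed R) (hRconv : Convex ℝ R)
    (hRcone : ∀ (c : ℝ), 0 ≤ c → ∀ v ∈ R, c • v ∈ R)
    (hRnoline : ∀ v ∈ R, -v ∈ R → v = 0)
    (hqpos : ∀ y ∈ P + R, 0 < 1 + ⟪α, y⟫)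
    (hαpos : ∀ v ∈ R, v ≠ 0 → 0 < ⟪α, v⟫) :
    Bornology.IsBounded ((fun y => (1 + ⟪α, y⟫)⁻¹ • y) '' (P + R)) := by
  rcases R.eq_empty_or_nonempty with hRe | hRne
  · simp [hRe]
  have h0R : (0 : EuclideanSpace ℝ (Fin l)) ∈ R := by
    obtain ⟨v, hv⟩ := hRne
    simpa using hRcone 0 le_rfl v hv
  -- bound on P
  obtain ⟨M, hM⟩ := hPcpt.isBounded.exists_norm_le
  obtain ⟨p₁, hp₁⟩ := hPne
  have hM0 : 0 ≤ M := le_trans (norm_nonneg _) (hM p₁ hp₁)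
  -- q is continuous
  have hqcont : Continuous fun y : EuclideanSpace ℝ (Fin l) => 1 + ⟪α, y⟫ := by
    exact continuous_const.add (continuous_const.inner continuous_id)
  -- ε : min of q on P
  obtain ⟨p₀, hp₀P, hp₀min⟩ := hPcpt.exists_isMinOn ⟨p₁, hp₁⟩ hqcont.continuousOn
  set ε : ℝ := 1 + ⟪α, p₀⟫ with hε
  have hεpos : 0 < ε := hqpos p₀ (by simpa using Set.add_mem_add hp₀P h0R)
  have hεle : ∀ p ∈ P, ε ≤ 1 + ⟪α, p⟫ := fun p hp => hp₀min hp
  -- c : lower bound for ⟪α, r⟫ / ‖r‖ on R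
  have hc : ∃ c : ℝ, 0 < c ∧ ∀ r ∈ R, c * ‖r‖ ≤ ⟪α, r⟫ := by
    set S : Set (EuclideanSpace ℝ (Fin l)) := R ∩ Metric.sphere 0 1 with hS
    rcases S.eq_empty_or_nonempty with hSe | hSne
    · refine ⟨1, one_pos, fun r hr => ?_⟩
      rcases eq_or_ne r 0 with rfl | hr0
      · simp
      · exfalso
        have h1 : ‖r‖⁻¹ • r ∈ S := by
          constructor
          · exact hRcone _ (inv_nonneg.2 (norm_nonneg r)) r hr
          · simp [norm_smul, abs_of_nonneg (inv_nonneg.2 (norm_nonneg r)),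
              inv_mul_cancel₀ (norm_ne_zero_iff.2 hr0)]
        rw [hSe] at h1; exact h1
    · have hScpt : IsCompact S :=
        (isCompact_sphere (0 : EuclideanSpace ℝ (Fin l)) 1).of_isClosed_subset
          (hRclosed.inter Metric.isClosed_sphere) Set.inter_subset_right
      have hcont : ContinuousOn (fun v : EuclideanSpace ℝ (Fin l) => ⟪α, v⟫) S :=
        (continuous_const.inner continuous_id).continuousOn
      obtain ⟨v₀, hv₀S, hv₀min⟩ := hScpt.exists_isMinOn hSne hcont
      have hv₀ne : v₀ ≠ 0 := by
        intro h
        have := hv₀S.2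
        rw [h] at this
        simp at this
      refine ⟨⟪α, v₀⟫, hαpos v₀ hv₀S.1 hv₀ne, fun r hr => ?_⟩
      rcases eq_or_ne r 0 with rfl | hr0
      · simp
      · have hrn : (0 : ℝ) < ‖r‖ := norm_pos_iff.2 hr0
        have h1 : ‖r‖⁻¹ • r ∈ S := by
          constructor
          · exact hRcone _ (inv_nonneg.2 (norm_nonneg r)) r hr
          · simp [norm_smul, abs_of_nonneg (inv_nonneg.2 (norm_nonneg r)),
              inv_mul_cancel₀ hrn.ne']
        have h2 : ⟪α, v₀⟫ ≤ ⟪α, ‖r‖⁻¹ • r⟫ := hv₀min h1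
        rw [real_inner_smul_right] at h2
        have := mul_le_mul_of_nonneg_left h2 hrn.le
        rw [← mul_assoc, mul_inv_cancel₀ hrn.ne', one_mul] at this
        linarith [this]
  obtain ⟨c, hcpos, hcle⟩ := hc
  -- final bound
  rw [isBounded_iff_forall_norm_le]
  refine ⟨M / ε + 1 / c, ?_⟩
  rintro x ⟨y, hy, rfl⟩
  obtain ⟨p, hp, r, hr, rfl⟩ := hy
  have hqy : 0 < 1 + ⟪α, p + r⟫ := hqpos _ (Set.add_mem_add hp hr)
  have hql : ε + c * ‖r‖ ≤ 1 + ⟪α, p + r⟫ := by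
    rw [inner_add_right]
    have := hεle p hp
    have := hcle r hr
    linarith
  have hny : ‖p + r‖ ≤ M + ‖r‖ := le_trans (norm_add_le _ _) (by linarith [hM p hp])
  have hCq : ‖p + r‖ ≤ (M / ε + 1 / c) * (1 + ⟪α, p + r⟫) := by
    have hC1 : M ≤ (M / ε + 1 / c) * ε := by
      rw [add_mul, div_mul_cancel₀ _ hεpos.ne']
      have : 0 ≤ 1 / c * ε := by positivity
      linarith
    have hC2 : 1 ≤ (M / ε + 1 / c) * c := by
      rw [add_mul, one_div, inv_mul_cancel₀ hcpos.ne']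
      have : 0 ≤ M / ε * c := by positivity
      linarith
    have hC0 : 0 ≤ M / ε + 1 / c := by positivity
    have h3 : (M / ε + 1 / c) * (ε + c * ‖r‖) ≤ (M / ε + 1 / c) * (1 + ⟪α, p + r⟫) :=
      mul_le_mul_of_nonneg_left hql hC0
    nlinarith [norm_nonneg r, mul_le_mul_of_nonneg_right hC2 (norm_nonneg r)]
  calc ‖(1 + ⟪α, p + r⟫)⁻¹ • (p + r)‖
      = (1 + ⟪α, p + r⟫)⁻¹ * ‖p + r‖ := by
        rw [norm_smul, Real.norm_eq_abs, abs_of_pos (inv_pos.2 hqy)]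
    _ ≤ M / ε + 1 / c := by
        rw [inv_mul_le_iff₀ hqy, mul_comm]
        exact hCq
end

section
/- With q(y) = 1 + α·y, P compact, q > 0 on P, and R a polyhedral cone with α·v ≥ ‖v‖/ρ for all v ∈ R (for some ρ > 0), the image point ȳ = y/q(y) of any y = y_P + y_R ∈ P + R satisfies ‖ȳ‖ ≤ π + ρ, where π is an upper bound for ‖z‖/q(z) over z ∈ P. -/
open scoped RealInnerProductSpace

/-- Norm estimate for the projective image: if `y = y_P + y_R` with `y_P ∈ P`
compact where `q > 0` and `‖z‖/q(z) ≤ π` on `P`, and `α·v ≥ ‖v‖/ρ` on the cone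
`R`, then `‖y/q(y)‖ ≤ π + ρ`. -/
theorem image_point_norm_bound (l : ℕ)
    (P R : Set (EuclideanSpace ℝ (Fin l))) (α : EuclideanSpace ℝ (Fin l))
    (π ρ : ℝ) (hρ : 0 < ρ)
    (hPcpt : IsCompact P)
    (hqP : ∀ z ∈ P, 0 < 1 + ⟪α, z⟫)
    (hπ : ∀ z ∈ P, ‖z‖ / (1 + ⟪α, z⟫) ≤ π)
    (hR : ∀ v ∈ R, ‖v‖ / ρ ≤ ⟪α, v⟫)
    (yP yR : EuclideanSpace ℝ (Fin l)) (hyP : yP ∈ P) (hyR : yR ∈ R) :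
    ‖(1 + ⟪α, yP + yR⟫)⁻¹ • (yP + yR)‖ ≤ π + ρ := by
  have hqP' := hqP yP hyP
  have ha : (0:ℝ) ≤ ⟪α, yR⟫ :=
    le_trans (by positivity) (hR yR hyR)
  have hsplit : (1 + ⟪α, yP + yR⟫) = (1 + ⟪α, yP⟫) + ⟪α, yR⟫ := by
    rw [inner_add_right]; ring
  set qP := 1 + ⟪α, yP⟫ with hqPdef
  set a := ⟪α, yR⟫ with hadef
  have hq : (0:ℝ) < 1 + ⟪α, yP + yR⟫ := by rw [hsplit]; linarith
  rw [norm_smul, Real.norm_eq_abs, abs_inv, abs_of_pos hq]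
  have h1 : ‖yP + yR‖ ≤ ‖yP‖ + ‖yR‖ := norm_add_le _ _
  have hπ' : ‖yP‖ / qP ≤ π := hπ yP hyP
  -- ‖yP‖/q ≤ ‖yP‖/qP ≤ π
  have h2 : ‖yP‖ / (1 + ⟪α, yP + yR⟫) ≤ π := by
    refine le_trans (div_le_div_of_nonneg_left (norm_nonneg _) hqP' ?_) hπ'
    rw [hsplit]; linarith
  -- ‖yR‖/q ≤ ρ
  have hyRle : ‖yR‖ ≤ ρ * a := by
    have := hR yR hyR
    rw [div_le_iff₀ hρ] at this; linarith [this]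
  have h3 : ‖yR‖ / (1 + ⟪α, yP + yR⟫) ≤ ρ := by
    rw [div_le_iff₀ hq]
    calc ‖yR‖ ≤ ρ * a := hyRle
      _ ≤ ρ * (1 + ⟪α, yP + yR⟫) := by
          apply mul_le_mul_of_nonneg_left _ hρ.le
          rw [hsplit]; linarith
  calc (1 + ⟪α, yP + yR⟫)⁻¹ * ‖yP + yR‖
      = ‖yP + yR‖ / (1 + ⟪α, yP + yR⟫) := by ring
    _ ≤ (‖yP‖ + ‖yR‖) / (1 + ⟪α, yP + yR⟫) := by
        gcongr
    _ = ‖yP‖ / (1 + ⟪α, yP + yR⟫) + ‖yR‖ / (1 + ⟪α, yP + yR⟫) := by ring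
    _ ≤ π + ρ := add_le_add h2 h3
end

section
/- Suppose f₁,…,f_{l−1}, g are differentiable functions on a domain Δ ⊂ ℝˡ whose common zero locus is finite and such that C = {f₁ = ⋯ = f_{l−1} = 0} is a smooth curve. Then no compact connected component (oval) of C can contain a zero of g unless the Jacobian determinant J = Jac(f₁,…,f_{l−1},g) also vanishes somewhere on that component. Precisely: if an oval of C contains a point with g = 0 and g has only simple zeroes on C, then J vanishes at some point of that oval. -/
/-- No oval (compact connected component, parametrized by a periodic regular
`C¹` curve) of the curve `C = {f₁ = ⋯ = f_{l-1} = 0}` can contain a zero of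
`g` unless the Jacobian determinant `J = Jac(f₁,…,f_{l-1},g)` vanishes
somewhere on that oval, provided `g` has only simple zeroes along the oval. -/
theorem no_zero_on_oval_without_jacobian_zero (n : ℕ)
    (fs : Fin n → EuclideanSpace ℝ (Fin (n + 1)) → ℝ)
    (g : EuclideanSpace ℝ (Fin (n + 1)) → ℝ)
    (hfs : ∀ i, ContDiff ℝ 1 (fs i)) (hg : ContDiff ℝ 1 g)
    (γ : ℝ → EuclideanSpace ℝ (Fin (n + 1)))
    (hγ : ContDiff ℝ 1 γ) (hper : Function.Periodic γ 1)
    (hreg : ∀ t, deriv γ t ≠ 0)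
    (honC : ∀ t, ∀ i, fs i (γ t) = 0)
    (hsmooth : ∀ t, LinearIndependent ℝ (fun i => fderiv ℝ (fs i) (γ t)))
    (hsimple : ∀ t, g (γ t) = 0 → deriv (g ∘ γ) t ≠ 0)
    (hzero : ∃ t, g (γ t) = 0) :
    ∃ t, Matrix.det (Matrix.of fun i j : Fin (n + 1) =>
        fderiv ℝ ((Fin.snoc fs g : Fin (n + 1) → EuclideanSpace ℝ (Fin (n + 1)) → ℝ) i) (γ t) (EuclideanSpace.single j 1)) = 0 := by
  by_contra hcon
  push_neg at hcon
  have hγd : ∀ t, DifferentiableAt ℝ γ t := fun t =>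
    (hγ.differentiable one_ne_zero).differentiableAt
  have hgd : ∀ x, DifferentiableAt ℝ g x := fun x =>
    (hg.differentiable one_ne_zero).differentiableAt
  -- The derivative of g ∘ γ never vanishes
  have key : ∀ t, deriv (g ∘ γ) t ≠ 0 := by
    intro t
    set v := deriv γ t with hv
    -- the linear map v ↦ (Df i v)
    set φ : Fin (n + 1) → (EuclideanSpace ℝ (Fin (n + 1)) →L[ℝ] ℝ) :=
      fun i => fderiv ℝ ((Fin.snoc fs g : Fin (n + 1) → EuclideanSpace ℝ (Fin (n + 1)) → ℝ) i) (γ t) with hφ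
    set T : EuclideanSpace ℝ (Fin (n + 1)) →ₗ[ℝ] (Fin (n + 1) → ℝ) :=
      LinearMap.pi (fun i => (φ i : EuclideanSpace ℝ (Fin (n + 1)) →ₗ[ℝ] ℝ)) with hT
    have hmat : LinearMap.toMatrix (EuclideanSpace.basisFun (Fin (n + 1)) ℝ).toBasis
        (Pi.basisFun ℝ (Fin (n + 1))) T = Matrix.of fun i j : Fin (n + 1) =>
        fderiv ℝ ((Fin.snoc fs g : Fin (n + 1) → EuclideanSpace ℝ (Fin (n + 1)) → ℝ) i) (γ t)
          (EuclideanSpace.single j 1) := by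
      ext i j
      simp [LinearMap.toMatrix_apply, hT, hφ]
    have hdet : IsUnit (LinearMap.toMatrix (EuclideanSpace.basisFun (Fin (n + 1)) ℝ).toBasis
        (Pi.basisFun ℝ (Fin (n + 1))) T).det := by
      rw [hmat]
      exact isUnit_iff_ne_zero.mpr (hcon t)
    have hinj : Function.Injective T := by
      rw [← LinearEquiv.coe_ofIsUnitDet hdet]
      exact (LinearEquiv.ofIsUnitDet hdet).injective
    have hTv : T v ≠ 0 := fun h => hreg t (hinj (by simpa using h))
    -- components along the fs vanish
    have hfsv : ∀ k : Fin n, T v (Fin.castSucc k) = 0 := by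
      intro k
      have hconst : (fun s => fs k (γ s)) = fun _ => (0 : ℝ) := funext fun s => honC s k
      have hd : deriv (fs k ∘ γ) t = 0 := by
        have : (fs k ∘ γ) = fun _ => (0 : ℝ) := hconst
        rw [this, deriv_const']
      have hcomp : deriv (fs k ∘ γ) t = fderiv ℝ (fs k) (γ t) (deriv γ t) :=
        fderiv_comp_deriv t ((hfs k).differentiable one_ne_zero _) (hγd t)
      have : T v (Fin.castSucc k) = fderiv ℝ (fs k) (γ t) v := by
        simp [hT, hφ, Fin.snoc_castSucc]
      rw [this, ← hv] at *
      rw [← hcomp] at *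
      simpa [hcomp] using hd
    -- hence the last component is nonzero
    have hlast : T v (Fin.last n) ≠ 0 := by
      intro h
      apply hTv
      funext i
      induction i using Fin.lastCases with
      | last => simpa using h
      | cast k => simpa using hfsv k
    have hcompg : deriv (g ∘ γ) t = fderiv ℝ g (γ t) (deriv γ t) :=
      fderiv_comp_deriv t (hgd _) (hγd t)
    have : T v (Fin.last n) = fderiv ℝ g (γ t) v := by
      simp [hT, hφ, Fin.snoc_last]
    rw [hcompg, ← hv, ← this]
    exact hlast
  -- but a periodic C¹ function attains a maximum, where the derivative vanishes
  set h : ℝ → ℝ := g ∘ γ with hh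
  have hhper : Function.Periodic h 1 := hper.comp g
  have hhc : Continuous h := hg.continuous.comp hγ.continuous
  obtain ⟨t₀, ht₀, hmax⟩ := isCompact_Icc.exists_isMaxOn (Set.nonempty_Icc.mpr zero_le_one)
    (hhc.continuousOn (s := Set.Icc (0 : ℝ) 1))
  have hglobal : IsMaxOn h Set.univ t₀ := by
    intro t _
    obtain ⟨y, hy, hxy⟩ := hhper.exists_mem_Ico₀ one_pos t
    have : h y ≤ h t₀ := hmax ⟨hy.1, hy.2.le⟩
    simpa [hxy] using this
  have hloc : IsLocalMax h t₀ := hglobal.isLocalMax Filter.univ_mem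
  exact key t₀ hloc.deriv_eq_zero
end

section
/- With s_0 ≤ 2^{C(l,2)} n^l and t_j ≤ 2^{C(l−j,2)} n^{l−j} · C(l+n+1, j) (binomial coefficient), the total 2 s_0 + Σ_{j=1}^{l} (l+1−j) t_j is bounded above by l · ((e² + 3)/2) · 2^{C(l,2)} · n^l. -/
lemma fpb_cle (l n : ℕ) (hn : 1 ≤ n) :
    ∀ j, j ≤ l + 1 → (l + n + 1).choose j ≤ n ^ j * (l + 2).choose j := by
  intro j
  induction j with
  | zero => intro _; simp
  | succ j ih =>
    intro hj
    have ihj := ih (by omega)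
    have hkey : l + n + 1 - j ≤ n * (l + 2 - j) := by
      have h1 : l + 2 - j = (l + 1 - j) + 1 := by omega
      have h2 : l + 1 - j ≤ n * (l + 1 - j) := Nat.le_mul_of_pos_left _ hn
      rw [h1, Nat.mul_add, Nat.mul_one]
      omega
    have h3 := Nat.choose_succ_right_eq (l + n + 1) j
    have h4 := Nat.choose_succ_right_eq (l + 2) j
    have hmain : (l + n + 1).choose (j+1) * (j+1) ≤ (n ^ (j+1) * (l + 2).choose (j+1)) * (j+1) := by
      rw [h3]
      calc (l + n + 1).choose j * (l + n + 1 - j)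
          ≤ (n ^ j * (l + 2).choose j) * (n * (l + 2 - j)) := Nat.mul_le_mul ihj hkey
        _ = n ^ (j+1) * ((l + 2).choose j * (l + 2 - j)) := by ring
        _ = n ^ (j+1) * ((l + 2).choose (j+1) * (j+1)) := by rw [h4]
        _ = (n ^ (j+1) * (l + 2).choose (j+1)) * (j+1) := by ring
    exact Nat.le_of_mul_le_mul_right hmain (Nat.succ_pos j)

lemma fpb_qlem (l : ℕ) : ∀ j, 1 ≤ j → j ≤ l →
    (l + 1 - j) * (l + 2).choose j * 2 ^ (l - 1) * 2 ^ ((l - j).choose 2) ≤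
      l * (l + 2) * 2 ^ (l.choose 2) := by
  intro j
  induction j with
  | zero => omega
  | succ j ih =>
    intro _ hjl
    rcases Nat.eq_zero_or_pos j with rfl | hj1
    · obtain ⟨m, rfl⟩ : ∃ m, l = m + 1 := ⟨l - 1, by omega⟩
      have hc : (m+1).choose 2 = m + m.choose 2 := by
        rw [Nat.choose_succ_succ, Nat.choose_one_right]
      have e1 : m + 1 + 1 - 1 = m + 1 := by omega
      have e2 : m + 1 - 1 = m := by omega
      rw [e1, e2, hc, Nat.choose_one_right, pow_add]
      exact le_of_eq (by ring)
    · have hjl' : j ≤ l := by omega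
      obtain ⟨k, hk⟩ : ∃ k, l - j = k + 1 := ⟨l - j - 1, by omega⟩
      refine le_trans ?_ (ih hj1 hjl')
      have h2p : k + 2 ≤ 2 ^ (k+1) := Nat.lt_two_pow_self (n := k+1)
      have hcoef : (k+1)*(k+3) ≤ (j+1)*((k+2)*2^k) := by
        calc (k+1)*(k+3) ≤ (k+2)*(k+2) := by nlinarith
          _ ≤ (k+2)*2^(k+1) := Nat.mul_le_mul_left _ h2p
          _ = 2*((k+2)*2^k) := by rw [pow_succ]; ring
          _ ≤ (j+1)*((k+2)*2^k) := Nat.mul_le_mul_right _ (by omega)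
      have core : (k+1) * (l+2).choose (j+1) ≤ (k+2) * (l+2).choose j * 2^k := by
        refine Nat.le_of_mul_le_mul_right ?_ (Nat.succ_pos j)
        have h4 := Nat.choose_succ_right_eq (l+2) j
        have hl2j : l + 2 - j = k + 3 := by omega
        calc (k+1) * (l+2).choose (j+1) * (j+1)
            = (k+1) * ((l+2).choose (j+1) * (j+1)) := by ring
          _ = (k+1) * ((l+2).choose j * (l + 2 - j)) := by rw [h4]
          _ = ((k+1)*(k+3)) * (l+2).choose j := by rw [hl2j]; ring
          _ ≤ ((j+1)*((k+2)*2^k)) * (l+2).choose j :=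
              Nat.mul_le_mul_right _ hcoef
          _ = (k+2) * (l+2).choose j * 2^k * (j+1) := by ring
      have hc2 : (l - j).choose 2 = k + k.choose 2 := by
        rw [hk, Nat.choose_succ_succ, Nat.choose_one_right]
      calc (l + 1 - (j+1)) * (l + 2).choose (j+1) * 2 ^ (l - 1) * 2 ^ ((l - (j+1)).choose 2)
          = ((k+1) * (l+2).choose (j+1)) * (2 ^ (l-1) * 2 ^ (k.choose 2)) := by
            rw [show l + 1 - (j+1) = k + 1 by omega, show l - (j+1) = k by omega]; ring
        _ ≤ ((k+2) * (l+2).choose j * 2^k) * (2 ^ (l-1) * 2 ^ (k.choose 2)) :=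
            Nat.mul_le_mul_right _ core
        _ = (l + 1 - j) * (l + 2).choose j * 2 ^ (l - 1) * 2 ^ ((l - j).choose 2) := by
            rw [show l + 1 - j = k + 2 by omega, hc2, pow_add]; ring

lemma fpb_key (l n j : ℕ) (hn : 1 ≤ n) (hj1 : 1 ≤ j) (hjl : j ≤ l) :
    (l + 1 - j) * (2 ^ ((l - j).choose 2) * n ^ (l - j) * (l + n + 1).choose j) * 2 ^ (l - 1) ≤
      l * (l + 2) * (2 ^ (l.choose 2) * n ^ l) := by
  have h1 := fpb_cle l n hn j (by omega)
  have h2 := fpb_qlem l j hj1 hjl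
  calc (l + 1 - j) * (2 ^ ((l - j).choose 2) * n ^ (l - j) * (l + n + 1).choose j) * 2 ^ (l - 1)
      ≤ (l + 1 - j) * (2 ^ ((l - j).choose 2) * n ^ (l - j) * (n ^ j * (l + 2).choose j)) * 2 ^ (l - 1) := by
        exact Nat.mul_le_mul_right _ (Nat.mul_le_mul_left _ (Nat.mul_le_mul_left _ h1))
    _ = ((l + 1 - j) * (l + 2).choose j * 2 ^ (l - 1) * 2 ^ ((l - j).choose 2)) * n ^ (l - j + j) := by
        rw [pow_add]; ring
    _ ≤ (l * (l + 2) * 2 ^ (l.choose 2)) * n ^ (l - j + j) := Nat.mul_le_mul_right _ h2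
    _ = l * (l + 2) * (2 ^ (l.choose 2) * n ^ l) := by
        rw [show l - j + j = l by omega]; ring

lemma fpb_num : ∀ l, 1 ≤ l → 2*l*l*(l+2) ≤ (5*l - 2) * 2^l := by
  intro l hl
  rcases lt_or_ge l 4 with h | h
  · interval_cases l <;> decide
  · clear hl
    induction l, h using Nat.le_induction with
    | base => decide
    | succ m hm ih =>
      have h1 : (m+1)*(m+1)*(m+3) ≤ 2*(m*m*(m+2)) := by nlinarith
      calc 2*(m+1)*(m+1)*(m+3) = 2*((m+1)*(m+1)*(m+3)) := by ring
        _ ≤ 2*(2*(m*m*(m+2))) := Nat.mul_le_mul_left _ h1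
        _ = (2*m*m*(m+2)) * 2 := by ring
        _ ≤ ((5*m-2) * 2^m) * 2 := Nat.mul_le_mul_right _ ih
        _ = (5*m-2) * 2^(m+1) := by rw [pow_succ]; ring
        _ ≤ (5*(m+1)-2) * 2^(m+1) := Nat.mul_le_mul_right _ (by omega)

/-- With `s₀ ≤ 2^C(l,2) nˡ` and `t_j ≤ 2^C(l-j,2) n^{l-j} C(l+n+1,j)`, the
total `2 s₀ + Σ_j (l+1-j) t_j` is at most `l·((e²+3)/2)·2^C(l,2)·nˡ`. -/
theorem fewnomial_path_bound (l n : ℕ) (hl : 0 < l) (hn : 0 < n)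
    (s0 : ℝ) (t : ℕ → ℝ) (ht0 : ∀ j, 0 ≤ t j)
    (hs0 : s0 ≤ 2 ^ (l.choose 2) * (n : ℝ) ^ l)
    (ht : ∀ j ∈ Finset.Icc 1 l,
      t j ≤ 2 ^ ((l - j).choose 2) * (n : ℝ) ^ (l - j) * ((l + n + 1).choose j)) :
    2 * s0 + ∑ j ∈ Finset.Icc 1 l, ((l : ℝ) + 1 - j) * t j ≤
      (l : ℝ) * ((Real.exp 2 + 3) / 2) * 2 ^ (l.choose 2) * (n : ℝ) ^ l := by
  have hp : (0:ℝ) < 2 ^ (l - 1) := by positivity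
  have hApos : (0:ℝ) < 2 ^ (l.choose 2) * (n : ℝ) ^ l := by positivity
  set A : ℝ := 2 ^ (l.choose 2) * (n : ℝ) ^ l with hAdef
  -- per-term bound
  have hB : ∀ j ∈ Finset.Icc 1 l, ((l : ℝ) + 1 - j) * t j ≤ (l : ℝ) * ((l:ℝ) + 2) * A / 2 ^ (l - 1) := by
    intro j hjmem
    obtain ⟨hj1, hjl⟩ := Finset.mem_Icc.mp hjmem
    obtain ⟨d, hd⟩ : ∃ d, l - j = d := ⟨l - j, rfl⟩
    have hld : l = j + d := by omega
    have hcd : ((l : ℝ) + 1 - j) = (d : ℝ) + 1 := by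
      rw [hld]; push_cast; ring
    have hc0 : (0:ℝ) ≤ (l : ℝ) + 1 - j := by rw [hcd]; positivity
    have h1 : ((l : ℝ) + 1 - j) * t j ≤
        ((l : ℝ) + 1 - j) * (2 ^ ((l - j).choose 2) * (n : ℝ) ^ (l - j) * ((l + n + 1).choose j)) :=
      mul_le_mul_of_nonneg_left (ht j hjmem) hc0
    have hkey := fpb_key l n j hn hj1 hjl
    rw [show l + 1 - j = d + 1 by omega, hd] at hkey
    have hkeyR : ((d:ℝ) + 1) * (2 ^ (d.choose 2) * (n : ℝ) ^ d * ((l + n + 1).choose j)) * 2 ^ (l - 1) ≤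
        (l : ℝ) * ((l:ℝ) + 2) * A := by
      have := (Nat.cast_le (α := ℝ)).mpr hkey
      push_cast at this
      rw [hAdef]
      push_cast
      convert this using 1 <;> ring
    rw [hd] at h1
    refine le_trans h1 ?_
    rw [le_div_iff₀ hp, hcd]
    exact hkeyR
  have hcard : (Finset.Icc 1 l).card = l := by rw [Nat.card_Icc]; omega
  have hsum : ∑ j ∈ Finset.Icc 1 l, ((l : ℝ) + 1 - j) * t j ≤
      (l : ℝ) * ((l : ℝ) * ((l:ℝ) + 2) * A / 2 ^ (l - 1)) := by
    calc ∑ j ∈ Finset.Icc 1 l, ((l : ℝ) + 1 - j) * t j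
        ≤ ∑ _j ∈ Finset.Icc 1 l, (l : ℝ) * ((l:ℝ) + 2) * A / 2 ^ (l - 1) := Finset.sum_le_sum hB
      _ = (l : ℝ) * ((l : ℝ) * ((l:ℝ) + 2) * A / 2 ^ (l - 1)) := by
          rw [Finset.sum_const, hcard, nsmul_eq_mul]
  -- numeric facts
  have hnum := fpb_num l hl
  have hnumR : (l : ℝ) * ((l : ℝ) * ((l:ℝ) + 2) / 2 ^ (l - 1)) ≤ 5 * (l:ℝ) - 2 := by
    have hc := (Nat.cast_le (α := ℝ)).mpr hnum
    have h52 : ((5 * l - 2 : ℕ) : ℝ) = 5 * (l:ℝ) - 2 := by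
      have : 2 ≤ 5 * l := by omega
      push_cast [Nat.cast_sub this]; ring
    have h2l : (2:ℝ) ^ l = 2 ^ (l-1) * 2 := by
      rw [← pow_succ]; congr 1; omega
    push_cast at hc
    rw [h52, h2l] at hc
    rw [mul_div_assoc', div_le_iff₀ hp]
    nlinarith
  have he : (7:ℝ) ≤ Real.exp 2 := by
    have h1 := Real.exp_one_gt_d9
    have h2 : Real.exp 2 = Real.exp 1 * Real.exp 1 := by
      rw [← Real.exp_add]; norm_num
    nlinarith
  have hl1 : (1:ℝ) ≤ (l:ℝ) := by exact_mod_cast hl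
  have hfin : 2 + (l : ℝ) * ((l : ℝ) * ((l:ℝ) + 2) / 2 ^ (l - 1)) ≤ (l:ℝ) * ((Real.exp 2 + 3) / 2) := by
    have : 5 * (l:ℝ) ≤ (l:ℝ) * ((Real.exp 2 + 3) / 2) := by nlinarith
    linarith
  calc 2 * s0 + ∑ j ∈ Finset.Icc 1 l, ((l : ℝ) + 1 - j) * t j
      ≤ 2 * A + (l : ℝ) * ((l : ℝ) * ((l:ℝ) + 2) * A / 2 ^ (l - 1)) := by
        have h2s : 2 * s0 ≤ 2 * A := by rw [hAdef]; linarith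
        linarith [hsum]
    _ = (2 + (l : ℝ) * ((l : ℝ) * ((l:ℝ) + 2) / 2 ^ (l - 1))) * A := by
        field_simp
    _ ≤ ((l:ℝ) * ((Real.exp 2 + 3) / 2)) * A := by
        exact mul_le_mul_of_nonneg_right hfin hApos.le
    _ = (l : ℝ) * ((Real.exp 2 + 3) / 2) * 2 ^ (l.choose 2) * (n : ℝ) ^ l := by
        rw [hAdef]; ring
end

section
/- Suppose x ∈ (ℂ^×)ⁿ satisfies x^{α_i} = p_i(x^{α_{n+1}}, …, x^{α_{l+n}}) for i = 1,…,n, where each p_i is an affine function, and β ∈ ℤ^{l+n} is a linear relation among α₁,…,α_{l+n}. Setting y_i = x^{α_{n+i}} for i = 1,…,l and p_{n+i}(y) = y_i, the point y satisfies the master-function equation p₁(y)^{β₁} ⋯ p_{l+n}(y)^{β_{l+n}} = 1, provided all p_i(y) ≠ 0. -/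
lemma zpow_sum_aux {ι : Type*} {x : ℂ} (hx : x ≠ 0) (s : Finset ι) (f : ι → ℤ) :
    x ^ (∑ i ∈ s, f i) = ∏ i ∈ s, x ^ f i := by
  induction s using Finset.cons_induction with
  | empty => simp
  | cons a s ha ih => rw [Finset.sum_cons, Finset.prod_cons, zpow_add₀ hx, ih]

/-- If `x ∈ (ℂ^×)ⁿ` satisfies the diagonal system
`x^{α_i} = p_i(x^{α_{n+1}},…,x^{α_{l+n}})` with each `p_i` affine, and `β` is
an integer linear relation among the `α_j`, then setting `y_i = x^{α_{n+i}}`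
and `p_{n+i}(y) = y_i`, the point `y` satisfies the master-function equation
`p₁(y)^{β₁} ⋯ p_{l+n}(y)^{β_{l+n}} = 1` provided all `p_i(y) ≠ 0`. -/
theorem gale_dual_master_function (n l : ℕ)
    (α : Fin (n + l) → Fin n → ℤ) (β : Fin (n + l) → ℤ)
    (hrel : ∑ j, β j • α j = 0)
    (p : Fin n → (Fin l → ℂ) → ℂ) (c : Fin n → ℂ) (A : Fin n → Fin l → ℂ)
    (hp : ∀ i y, p i y = c i + ∑ j, A i j * y j)
    (x : Fin n → ℂ) (hx : ∀ k, x k ≠ 0)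
    (hdiag : ∀ i : Fin n, (∏ k, x k ^ α (Fin.castAdd l i) k) =
      p i (fun j => ∏ k, x k ^ α (Fin.natAdd n j) k)) :
    let y : Fin l → ℂ := fun j => ∏ k, x k ^ α (Fin.natAdd n j) k
    let P : Fin (n + l) → ℂ :=
      Fin.addCases (fun i => p i y) (fun j => y j)
    (∀ j, P j ≠ 0) → ∏ j, P j ^ β j = 1 := by
  intro y P _
  have hP : ∀ j, P j = ∏ k, x k ^ α j k := by
    intro j
    refine Fin.addCases (fun i => ?_) (fun i => ?_) j
    · simp only [P, Fin.addCases_left]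
      exact (hdiag i).symm
    · simp only [P, Fin.addCases_right, y]
  calc ∏ j, P j ^ β j = ∏ j, ∏ k, x k ^ (α j k * β j) := by
        refine Finset.prod_congr rfl fun j _ => ?_
        rw [hP j, ← Finset.prod_zpow]
        exact Finset.prod_congr rfl fun k _ => (zpow_mul (x k) _ _).symm
    _ = ∏ k, x k ^ (∑ j, α j k * β j) := by
        rw [Finset.prod_comm]
        exact Finset.prod_congr rfl fun k _ => (zpow_sum_aux (hx k) _ _).symm
    _ = 1 := by
        refine Finset.prod_eq_one fun k _ => ?_
        have := congrFun hrel k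
        simp only [Finset.sum_apply, Pi.smul_apply, smul_eq_mul, Pi.zero_apply] at this
        have h0 : ∑ j, α j k * β j = 0 := by
          rw [← this]; exact Finset.sum_congr rfl fun j _ => mul_comm _ _
        rw [h0, zpow_zero]
end
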